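/- The orthogonal basis f_j = Σ_{k=1}^{j} (1 + s² + … + s^{2k−2}) E_k satisfies (f_i, f_j) = δ_{ij} · s^{−2i+1}(1−s^{2i})(1−s^{2i+2})/(1−s²)² with respect to Squier's form, for s on the unit circle with s² ≠ 1. -/

import Mathlib

noncomputable def sqcc (s : ℂ) (a : ℕ) : ℂ := ((s^2)^(a+1) - 1)/(s^2 - 1)

noncomputable def sqHH (s : ℂ) (a b : ℕ) : ℂ :=
  if a = b then s + s⁻¹ else if a + 1 = b then -s⁻¹ else if b + 1 = a then -s else 0

lemma sqcc_eq (s : ℂ) (hs2 : s ^ 2 ≠ 1) (a : ℕ) :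
    (∑ t ∈ Finset.range (a + 1), s ^ (2 * t)) = sqcc s a := by
  simp only [pow_mul, geom_sum_eq hs2, sqcc]

lemma sq_inner (s : ℂ) (hs2 : s ^ 2 ≠ 1) (hs0 : s ≠ 0) (m j : ℕ) (hj : j < m) (a : ℕ) :
    (∑ b ∈ Finset.range m, sqHH s a b * (if b ≤ j then sqcc s b else 0))
      = if a = j then s⁻¹ * sqcc s j + s ^ (2 * j + 1)
        else if a = j + 1 then -(s * sqcc s j) else 0 := by
  have h1 : s ^ 2 - 1 ≠ 0 := sub_ne_zero.2 hs2
  have hsub : Finset.range (j+1) ⊆ Finset.range m := Finset.range_subset_range.2 hj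
  rw [← Finset.sum_subset hsub (by
    intro x hx hx2
    simp only [Finset.mem_range, Nat.lt_succ_iff, not_le] at hx2
    rw [if_neg (by omega), mul_zero])]
  have split : ∀ b ∈ Finset.range (j+1), sqHH s a b * (if b ≤ j then sqcc s b else 0) =
      (if b = a then (s + s⁻¹) * sqcc s b else 0) + (if b = a + 1 then -s⁻¹ * sqcc s b else 0)
        + (if a = b + 1 then -s * sqcc s b else 0) := by
    intro b hb
    simp only [Finset.mem_range, Nat.lt_succ_iff] at hb
    rw [if_pos hb]
    unfold sqHH
    split_ifs <;> first | ring1 | (exfalso; omega)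
  rw [Finset.sum_congr rfl split]
  simp only [Finset.sum_add_distrib, Finset.sum_ite_eq', Finset.mem_range, Nat.lt_succ_iff]
  have h3 : (∑ b ∈ Finset.range (j+1), if a = b + 1 then -s * sqcc s b else 0)
      = if 1 ≤ a ∧ a ≤ j + 1 then -s * sqcc s (a - 1) else 0 := by
    match a with
    | 0 => simp
    | a' + 1 =>
      have : ∀ b ∈ Finset.range (j+1), (if a' + 1 = b + 1 then -s * sqcc s b else 0)
          = (if b = a' then -s * sqcc s b else 0) := by
        intro b _; split_ifs <;> first | rfl | (exfalso; omega)
      rw [Finset.sum_congr rfl this, Finset.sum_ite_eq', ]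
      simp only [Finset.mem_range, Nat.lt_succ_iff]
      split_ifs <;> first | rfl | (exfalso; omega)
  rw [h3]
  rcases Nat.lt_trichotomy a j with h | h | h
  · rw [if_pos (by omega : a ≤ j), if_pos (by omega : a + 1 ≤ j),
      if_neg (by omega : ¬ a = j), if_neg (by omega : ¬ a = j + 1)]
    match a with
    | 0 =>
      rw [if_neg (by omega : ¬ (1 ≤ 0 ∧ 0 ≤ j + 1))]
      simp only [Nat.le_refl, and_true, Nat.not_succ_le_zero, (by omega : ¬ (1 ≤ 0)), false_and, if_false, zero_add]
      unfold sqcc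
      field_simp
      ring
    | a' + 1 =>
      rw [if_pos (by omega)]
      unfold sqcc
      simp only [Nat.add_sub_cancel]
      field_simp
      ring
  · subst h
    rw [if_pos le_rfl, if_neg (by omega : ¬ a + 1 ≤ a), if_pos rfl, add_zero]
    match a with
    | 0 =>
      rw [if_neg (by omega), add_zero]
      unfold sqcc
      field_simp
      ring
    | a' + 1 =>
      rw [if_pos (by omega)]
      unfold sqcc
      simp only [Nat.add_sub_cancel]
      field_simp
      ring
  · rw [if_neg (by omega : ¬ a ≤ j), if_neg (by omega : ¬ a + 1 ≤ j),
      if_neg (by omega : ¬ a = j)]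
    rcases Nat.eq_or_lt_of_le h with h' | h'
    · rw [if_pos (by omega), if_pos h'.symm]
      have : a - 1 = j := by omega
      rw [this]; ring
    · rw [if_neg (by omega), if_neg (by omega)]
      ring

lemma sq_outer (s A B : ℂ) (m i j : ℕ) (hi : i < m) (hj : j < m) (d : ℕ → ℂ) :
    (∑ a ∈ Finset.range m, (if a ≤ i then d a else 0) *
        (if a = j then A else if a = j + 1 then B else 0))
      = (if j ≤ i then d j * A else 0) + (if j + 1 ≤ i then d (j + 1) * B else 0) := by
  have split : ∀ a ∈ Finset.range m, (if a ≤ i then d a else 0) *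
      (if a = j then A else if a = j + 1 then B else 0)
      = (if a = j then (if j ≤ i then d j * A else 0) else 0)
        + (if a = j + 1 then (if j + 1 ≤ i then d (j + 1) * B else 0) else 0) := by
    intro a _
    by_cases h1 : a = j
    · subst h1
      by_cases h3 : a ≤ i
      · simp [h3, (by omega : ¬ a = a + 1)]
      · simp [h3, (by omega : ¬ a = a + 1)]
    · by_cases h2 : a = j + 1
      · subst h2
        by_cases h3 : j + 1 ≤ i
        · simp [h1, h3]
        · simp [h1, h3]
      · simp [h1, h2]
  rw [Finset.sum_congr rfl split, Finset.sum_add_distrib, Finset.sum_ite_eq',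
    Finset.sum_ite_eq', if_pos (Finset.mem_range.2 hj)]
  by_cases hm : j + 1 < m
  · rw [if_pos (Finset.mem_range.2 hm)]
  · rw [if_neg (fun hmem => hm (Finset.mem_range.1 hmem)), if_neg (by omega : ¬ j + 1 ≤ i)]

open Matrix

/-- The vectors `f_j = Σ_{k=1}^{j} (1 + s² + ⋯ + s^{2k-2}) E_k` are orthogonal
for Squier's form, with
`(f_i, f_j) = δ_{ij} s^{-2i+1}(1-s^{2i})(1-s^{2i+2})/(1-s²)²`
(here the basis is 0-indexed, so index `a` corresponds to `i = a + 1`). -/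
theorem squier_orthogonal_basis (n : ℕ) (s : ℂ) (hs : ‖s‖ = 1)
    (hs2 : s ^ 2 ≠ 1)
    (J : Matrix (Fin (n - 1)) (Fin (n - 1)) ℂ)
    (hJ : ∀ a b : Fin (n - 1), J a b =
      if a = b then s + s⁻¹
      else if (a : ℕ) + 1 = (b : ℕ) then -s⁻¹
      else if (b : ℕ) + 1 = (a : ℕ) then -s
      else 0)
    (f : Fin (n - 1) → Fin (n - 1) → ℂ)
    (hf : ∀ j a : Fin (n - 1), f j a =
      if (a : ℕ) ≤ (j : ℕ) then ∑ t ∈ Finset.range ((a : ℕ) + 1), s ^ (2 * t)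
      else 0)
    (i j : Fin (n - 1)) :
    (∑ a, ∑ b, (starRingEnd ℂ) (f i a) * J a b * f j b) =
      (if i = j then
        s ^ (-(2 * ((i : ℤ) + 1)) + 1) *
          (1 - s ^ (2 * ((i : ℕ) + 1))) * (1 - s ^ (2 * ((i : ℕ) + 1) + 2)) /
          (1 - s ^ 2) ^ 2
      else 0) := by
  have hs0 : s ≠ 0 := by
    intro h; rw [h] at hs; simp at hs
  have hmc : s * (starRingEnd ℂ) s = 1 := by
    rw [Complex.mul_conj, Complex.normSq_eq_norm_sq, hs]; norm_num
  have hconj : (starRingEnd ℂ) s = s⁻¹ := eq_inv_of_mul_eq_one_right hmc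
  have h1 : s ^ 2 - 1 ≠ 0 := sub_ne_zero.2 hs2
  have h1' : (1 : ℂ) - s ^ 2 ≠ 0 := sub_ne_zero.2 (Ne.symm hs2)
  have h2 : s⁻¹ ^ 2 - 1 ≠ 0 := by
    refine sub_ne_zero.2 fun h => hs2 ?_
    rw [inv_pow, inv_eq_one] at h
    exact h
  have hconj_cc : ∀ a : ℕ, (starRingEnd ℂ) (sqcc s a)
      = ((s⁻¹ ^ 2) ^ (a + 1) - 1) / (s⁻¹ ^ 2 - 1) := by
    intro a
    simp only [sqcc, map_div₀, map_sub, map_pow, _root_.map_one, hconj]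
  set F : ℕ → ℕ → ℂ := fun a b =>
    (if a ≤ (i : ℕ) then (starRingEnd ℂ) (sqcc s a) else 0)
      * (sqHH s a b * (if b ≤ (j : ℕ) then sqcc s b else 0)) with hF
  have step1 : (∑ a, ∑ b, (starRingEnd ℂ) (f i a) * J a b * f j b)
      = ∑ a : Fin (n - 1), ∑ b : Fin (n - 1), F (a : ℕ) (b : ℕ) := by
    refine Finset.sum_congr rfl fun a _ => Finset.sum_congr rfl fun b _ => ?_
    rw [hf, hf, hJ, hF]
    simp only [sqcc_eq s hs2, sqHH, Fin.ext_iff, apply_ite (starRingEnd ℂ), map_zero]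
    ring
  have step2 : (∑ a : Fin (n - 1), ∑ b : Fin (n - 1), F (a : ℕ) (b : ℕ))
      = ∑ a ∈ Finset.range (n - 1), ∑ b ∈ Finset.range (n - 1), F a b := by
    rw [← Fin.sum_univ_eq_sum_range (fun a => ∑ b ∈ Finset.range (n - 1), F a b) (n - 1)]
    exact Finset.sum_congr rfl fun a _ => Fin.sum_univ_eq_sum_range (F (a : ℕ)) (n - 1)
  have step3 : (∑ a ∈ Finset.range (n - 1), ∑ b ∈ Finset.range (n - 1), F a b)
      = ∑ a ∈ Finset.range (n - 1),
          (if a ≤ (i : ℕ) then (starRingEnd ℂ) (sqcc s a) else 0) *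
            (if a = (j : ℕ) then s⁻¹ * sqcc s (j : ℕ) + s ^ (2 * (j : ℕ) + 1)
              else if a = (j : ℕ) + 1 then -(s * sqcc s (j : ℕ)) else 0) := by
    refine Finset.sum_congr rfl fun a _ => ?_
    rw [hF]
    rw [← Finset.mul_sum, sq_inner s hs2 hs0 (n - 1) (j : ℕ) j.isLt a]
  rw [step1, step2, step3,
    sq_outer s _ _ (n - 1) (i : ℕ) (j : ℕ) i.isLt j.isLt _]
  rcases eq_or_ne i j with rfl | hij
  · rw [if_pos rfl, if_pos le_rfl, if_neg (by omega), add_zero, hconj_cc]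
    have hz : s ^ (-(2 * ((i : ℤ) + 1)) + 1) = (s ^ (2 * (i : ℕ) + 1) : ℂ)⁻¹ := by
      rw [show -(2 * ((i : ℤ) + 1)) + 1 = -((2 * (i : ℕ) + 1 : ℕ) : ℤ) by push_cast; ring,
        _root_.zpow_neg, zpow_natCast]
    rw [hz]
    unfold sqcc
    simp only [inv_pow]
    field_simp
    ring
  · rw [if_neg hij]
    rcases Nat.lt_trichotomy (i : ℕ) (j : ℕ) with h | h | h
    · rw [if_neg (by omega), if_neg (by omega), add_zero]
    · exact absurd (Fin.ext h) hij
    · rw [if_pos (by omega), if_pos (by omega), hconj_cc, hconj_cc]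
      unfold sqcc
      simp only [inv_pow]
      field_simp
      ring
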